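/- Let K : {(t,τ) : 0 ≤ τ ≤ t ≤ T} → ℝ be measurable with |K(t,τ)| ≤ C/√(t − τ) for some constant C > 0 and all 0 ≤ τ < t ≤ T. If a₀ : [0,T] → ℝ is continuous and satisfies a₀(t) = ∫₀ᵗ K(t,τ) a₀(τ) dτ for all t ∈ [0,T], then a₀ ≡ 0 on [0,T]. -/

import Mathlib

open MeasureTheory Set Topology Filter
open scoped Interval
set_option maxHeartbeats 1000000

lemma aux_intble (s t : ℝ) : IntervalIntegrable (fun τ => (t - τ) ^ (-(1/2) : ℝ)) volume s t := by
  have h := (intervalIntegral.intervalIntegrable_rpow' (a := t - s) (b := t - t) (r := -(1/2)) (by norm_num)).comp_sub_left t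
  simpa using h

lemma aux_int (s t : ℝ) :
    ∫ τ in s..t, (t - τ) ^ (-(1/2) : ℝ) = 2 * Real.sqrt (t - s) := by
  rw [intervalIntegral.integral_comp_sub_left (fun x => x ^ (-(1/2) : ℝ)) t]
  rw [integral_rpow (Or.inl (by norm_num)), sub_self]
  rw [Real.zero_rpow (by norm_num)]
  have h2 : (-(1/2 : ℝ) + 1) = 1/2 := by norm_num
  rw [h2, Real.sqrt_eq_rpow]
  ring

theorem stmt_10 (T C : ℝ) (hT : 0 < T) (hC : 0 < C)
    (K : ℝ → ℝ → ℝ) (hKmeas : Measurable (Function.uncurry K))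
    (hKbound : ∀ t τ : ℝ, 0 ≤ τ → τ < t → t ≤ T → |K t τ| ≤ C / Real.sqrt (t - τ))
    (a₀ : ℝ → ℝ) (ha₀ : ContinuousOn a₀ (Set.Icc 0 T))
    (heq : ∀ t ∈ Set.Icc (0:ℝ) T, a₀ t = ∫ τ in (0:ℝ)..t, K t τ * a₀ τ) :
    ∀ t ∈ Set.Icc (0:ℝ) T, a₀ t = 0 := by
  set δ : ℝ := ((4*C)⁻¹)^2 with hδdef
  have hδpos : 0 < δ := by positivity
  -- key extension step
  have key : ∀ s ∈ Icc (0:ℝ) T, (∀ u ∈ Icc 0 s, a₀ u = 0) → ∀ b, s ≤ b → b ≤ T → b ≤ s + δ →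
      ∀ u ∈ Icc (0:ℝ) b, a₀ u = 0 := by
    intro s hs hz b hsb hbT hbδ
    have hsub : Icc s b ⊆ Icc 0 T := Icc_subset_Icc hs.1 hbT
    obtain ⟨t₀, ht₀, hmax⟩ := (isCompact_Icc (a := s) (b := b)).exists_isMaxOn
      (nonempty_Icc.mpr hsb) ((ha₀.mono hsub).abs)
    set M : ℝ := |a₀ t₀| with hM
    have hMnn : 0 ≤ M := abs_nonneg _
    have ht₀T : t₀ ∈ Icc (0:ℝ) T := hsub ht₀
    set g : ℝ → ℝ := fun τ => C * M * (t₀ - τ) ^ (-(1/2) : ℝ) with hg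
    have hgint : IntervalIntegrable g volume s t₀ :=
      ((aux_intble s t₀).const_mul (C * M))
    set f : ℝ → ℝ := fun τ => K t₀ τ * a₀ τ with hf
    have hIoc : Ι s t₀ = Ioc s t₀ := uIoc_of_le ht₀.1
    have hbound : ∀ τ ∈ Ioo s t₀, ‖f τ‖ ≤ g τ := by
      intro τ hτ
      have hτ0 : 0 ≤ τ := le_trans hs.1 hτ.1.le
      have hτt : τ < t₀ := hτ.2
      have hpos : 0 < t₀ - τ := by linarith
      have h1 : |K t₀ τ| ≤ C / Real.sqrt (t₀ - τ) := hKbound t₀ τ hτ0 hτt ht₀T.2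
      have h2 : |a₀ τ| ≤ M := hmax ⟨hτ.1.le, hτ.2.le.trans ht₀.2⟩
      have : ‖f τ‖ = |K t₀ τ| * |a₀ τ| := by rw [hf]; simp [abs_mul]
      rw [this]
      have hdiv : C / Real.sqrt (t₀ - τ) = C * (t₀ - τ) ^ (-(1/2) : ℝ) := by
        rw [Real.rpow_neg hpos.le, ← Real.sqrt_eq_rpow, div_eq_mul_inv]
      calc |K t₀ τ| * |a₀ τ| ≤ (C / Real.sqrt (t₀ - τ)) * M :=
            mul_le_mul h1 h2 (abs_nonneg _) (by positivity)
        _ = g τ := by rw [hdiv, hg]; ring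
    have haebound : ∀ᵐ τ ∂(volume.restrict (Ι s t₀)), ‖f τ‖ ≤ g τ := by
      rw [hIoc, ← Measure.restrict_congr_set Ioo_ae_eq_Ioc]
      exact (ae_restrict_iff' measurableSet_Ioo).mpr (Filter.Eventually.of_forall hbound)
    have hfmeas : AEStronglyMeasurable f (volume.restrict (Ioc s t₀)) := by
      have h1 : Measurable (fun τ => K t₀ τ) := hKmeas.of_uncurry_left
      have hsub2 : Ioc s t₀ ⊆ Icc (0:ℝ) T := fun x hx => hsub ⟨hx.1.le, hx.2.trans ht₀.2⟩
      have h2 : AEMeasurable a₀ (volume.restrict (Ioc s t₀)) :=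
        (ha₀.mono hsub2).aemeasurable measurableSet_Ioc
      exact (h1.aemeasurable.mul h2).aestronglyMeasurable
    have hfint : IntervalIntegrable f volume s t₀ := by
      rw [intervalIntegrable_iff, hIoc]
      refine Integrable.mono' (g := g) ?_ hfmeas ?_
      · have h := intervalIntegrable_iff.mp hgint
        rwa [hIoc] at h
      · rw [← hIoc]; exact haebound
    have hfzero : ∀ τ ∈ Ι (0:ℝ) s, f τ = 0 := by
      intro τ hτ
      rw [uIoc_of_le hs.1] at hτ
      have : a₀ τ = 0 := hz τ ⟨hτ.1.le, hτ.2⟩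
      simp [hf, this]
    have hfint0 : IntervalIntegrable f volume 0 s := by
      have hae : ∀ᵐ τ ∂(volume.restrict (Ι (0:ℝ) s)), f τ = 0 :=
        (ae_restrict_iff' measurableSet_uIoc).mpr (Filter.Eventually.of_forall hfzero)
      rw [intervalIntegrable_iff]
      exact (integrable_zero _ _ _).congr (hae.mono fun x hx => hx.symm)
    have hzero0 : (∫ τ in (0:ℝ)..s, f τ) = 0 :=
      intervalIntegral.integral_zero_ae (Filter.Eventually.of_forall hfzero)
    have hsplit : a₀ t₀ = ∫ τ in s..t₀, f τ := by
      rw [heq t₀ ht₀T, ← intervalIntegral.integral_add_adjacent_intervals hfint0 hfint, hzero0,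
        zero_add]
    -- the main estimate
    have hgval : (∫ τ in s..t₀, g τ) = C * M * (2 * Real.sqrt (t₀ - s)) := by
      rw [hg]
      rw [intervalIntegral.integral_const_mul]
      rw [aux_int]
    have hest : M ≤ C * M * (2 * Real.sqrt (t₀ - s)) := by
      have h := intervalIntegral.norm_integral_le_abs_of_norm_le haebound hgint
      rw [← hsplit, hgval] at h
      calc M = ‖a₀ t₀‖ := rfl
        _ ≤ |C * M * (2 * Real.sqrt (t₀ - s))| := h
        _ = C * M * (2 * Real.sqrt (t₀ - s)) := abs_of_nonneg (by positivity)
    have hsqrt : Real.sqrt (t₀ - s) ≤ (4*C)⁻¹ := by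
      have h1 : t₀ - s ≤ δ := by
        have := ht₀.2; linarith
      calc Real.sqrt (t₀ - s) ≤ Real.sqrt δ := Real.sqrt_le_sqrt h1
        _ = (4*C)⁻¹ := by rw [hδdef, Real.sqrt_sq (by positivity)]
    have hM0 : M = 0 := by
      have h2 : C * M * (2 * Real.sqrt (t₀ - s)) ≤ C * M * (2 * (4*C)⁻¹) := by
        have := mul_le_mul_of_nonneg_left (mul_le_mul_of_nonneg_left hsqrt (by norm_num : (0:ℝ) ≤ 2)) (by positivity : (0:ℝ) ≤ C * M)
        linarith
      have h3 : C * M * (2 * (4*C)⁻¹) = M / 2 := by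
        field_simp
        ring
      nlinarith [hest, hMnn]
    intro u hu
    rcases le_or_gt u s with h | h
    · exact hz u ⟨hu.1, h⟩
    · have : |a₀ u| ≤ M := hmax ⟨h.le, hu.2⟩
      rw [hM0] at this
      exact abs_eq_zero.mp (le_antisymm this (abs_nonneg _))
  -- the set of "good" endpoints
  set S : Set ℝ := {s | s ∈ Icc (0:ℝ) T ∧ ∀ u ∈ Icc (0:ℝ) s, a₀ u = 0} with hS
  have h00 : a₀ 0 = 0 := by
    have := heq 0 ⟨le_refl 0, hT.le⟩
    simpa using this
  have hS0 : (0:ℝ) ∈ S := by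
    refine ⟨⟨le_refl 0, hT.le⟩, fun u hu => ?_⟩
    have : u = 0 := le_antisymm hu.2 hu.1
    rw [this]; exact h00
  have hSne : S.Nonempty := ⟨0, hS0⟩
  have hSbdd : BddAbove S := ⟨T, fun x hx => hx.1.2⟩
  set s₀ : ℝ := sSup S with hs₀
  have hs₀mem : s₀ ∈ Icc (0:ℝ) T := ⟨le_csSup hSbdd hS0, csSup_le hSne fun x hx => hx.1.2⟩
  -- a₀ vanishes on [0, s₀]
  have hzero₀ : ∀ u ∈ Icc (0:ℝ) s₀, a₀ u = 0 := by
    intro u hu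
    rcases lt_or_eq_of_le hu.2 with h | h
    · obtain ⟨x, hxS, hx⟩ := exists_lt_of_lt_csSup hSne h
      exact hxS.2 u ⟨hu.1, hx.le⟩
    · -- u = s₀ : continuity
      rcases eq_or_lt_of_le hu.1 with h0 | h0
    -- cases on s₀ = 0 or not? careful: hu.1 : 0 ≤ u
      · rw [← h0]; exact h00
      · -- 0 < u = s₀; limit from the left
        have hxz : ∀ x ∈ Ico (0:ℝ) u, a₀ x = 0 := by
          intro x hx
          obtain ⟨y, hyS, hy⟩ := exists_lt_of_lt_csSup hSne (h ▸ hx.2)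
          exact hyS.2 x ⟨hx.1, hy.le⟩
        have hne : (𝓝[Ico (0:ℝ) u] u).NeBot := by
          rw [← mem_closure_iff_nhdsWithin_neBot, closure_Ico (ne_of_lt h0)]
          exact ⟨h0.le, le_refl u⟩
        have huT : u ≤ T := le_trans hu.2 hs₀mem.2
        have htend : Filter.Tendsto a₀ (𝓝[Ico (0:ℝ) u] u) (𝓝 (a₀ u)) :=
          (ha₀ u ⟨hu.1, huT⟩).tendsto.mono_left
            (nhdsWithin_mono u (fun x hx => ⟨hx.1, hx.2.le.trans huT⟩))
        have htend0 : Filter.Tendsto a₀ (𝓝[Ico (0:ℝ) u] u) (𝓝 0) :=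
          tendsto_const_nhds.congr'
            (eventually_nhdsWithin_of_forall (fun x hx => (hxz x hx).symm))
        exact tendsto_nhds_unique htend htend0
  have hs₀T : s₀ = T := by
    by_contra hne'
    have hlt : s₀ < T := lt_of_le_of_ne hs₀mem.2 hne'
    set b := min T (s₀ + δ) with hb
    have hbgt : s₀ < b := lt_min hlt (by linarith)
    have hbT : b ≤ T := min_le_left _ _
    have hbδ : b ≤ s₀ + δ := min_le_right _ _
    have hbS : b ∈ S :=
      ⟨⟨le_trans hs₀mem.1 hbgt.le, hbT⟩, key s₀ hs₀mem hzero₀ b hbgt.le hbT hbδ⟩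
    exact absurd (le_csSup hSbdd hbS) (not_le.mpr hbgt)
  intro t ht
  exact hzero₀ t ⟨ht.1, hs₀T ▸ ht.2⟩
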